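/- The number of pairs of partitions (μ, ν) with |μ| + |ν| = n and ν_i ≤ μ_i + 1 for all i equals p₂(n) − p₂(n−2), where p₂(m) denotes the number of pairs of partitions (λ, ρ) with |λ| + |ρ| = m. -/

import Mathlib

/-- A partition encoded as a weakly decreasing function `ℕ → ℕ` with finitely many
nonzero parts (zero-padded). -/
def IsPartitionFun (f : ℕ → ℕ) : Prop :=
  Antitone f ∧ ∃ N, ∀ i, N ≤ i → f i = 0

/-- `p₂ m` = number of pairs of partitions of total size `m`. -/
noncomputable def numPartitionPairs (m : ℕ) : ℕ :=
  Nat.card {p : (ℕ → ℕ) × (ℕ → ℕ) //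
    IsPartitionFun p.1 ∧ IsPartitionFun p.2 ∧
      (∑ᶠ i, p.1 i) + (∑ᶠ i, p.2 i) = m}

namespace PartitionPairsAux

/-- The condition defining a pair of partitions of total size `n`. -/
def PairCond (n : ℕ) (p : (ℕ → ℕ) × (ℕ → ℕ)) : Prop :=
  IsPartitionFun p.1 ∧ IsPartitionFun p.2 ∧
    (∑ᶠ i, p.1 i) + (∑ᶠ i, p.2 i) = n

/-- The type of pairs of partitions of total size `n`. -/
abbrev PairT (n : ℕ) := {p : (ℕ → ℕ) × (ℕ → ℕ) // PairCond n p}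

lemma numPartitionPairs_eq (n : ℕ) : numPartitionPairs n = Nat.card (PairT n) := rfl

/-- "Bad" pairs: those with a violation `ν i ≥ μ i + 2`. -/
abbrev BadT (n : ℕ) := {p : (ℕ → ℕ) × (ℕ → ℕ) // PairCond n p ∧ ∃ i, p.1 i + 2 ≤ p.2 i}

/-- "Good" pairs: those with `ν i ≤ μ i + 1` everywhere. -/
abbrev GoodT (n : ℕ) := {p : (ℕ → ℕ) × (ℕ → ℕ) // PairCond n p ∧ ∀ i, p.2 i ≤ p.1 i + 1}

/-! ### finsum helpers -/

lemma finsum_eq_range (f : ℕ → ℕ) (N : ℕ) (h : ∀ i, N ≤ i → f i = 0) :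
    ∑ᶠ i, f i = ∑ i ∈ Finset.range N, f i := by
  apply finsum_eq_sum_of_support_subset
  intro x hx
  simp only [Function.mem_support] at hx
  simp only [Finset.coe_range, Set.mem_Iio]
  by_contra h'
  exact hx (h x (by omega))

lemma part_le_finsum (f : ℕ → ℕ) (N : ℕ) (h : ∀ i, N ≤ i → f i = 0) (i : ℕ) :
    f i ≤ ∑ᶠ j, f j := by
  rw [finsum_eq_range f (max N (i+1)) (fun k hk => h k (le_trans (le_max_left _ _) hk))]
  exact Finset.single_le_sum (fun k _ => Nat.zero_le _)
    (Finset.mem_range.2 (lt_of_lt_of_le (Nat.lt_succ_self i) (le_max_right _ _)))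

lemma zero_of_finsum_le (f : ℕ → ℕ) (hf : Antitone f) (N : ℕ) (h : ∀ i, N ≤ i → f i = 0)
    (i : ℕ) (hi : ∑ᶠ j, f j ≤ i) : f i = 0 := by
  by_contra hne
  have h1 : 1 ≤ f i := Nat.one_le_iff_ne_zero.2 hne
  have hall : ∀ k ∈ Finset.range (i+1), 1 ≤ f k := fun k hk =>
    le_trans h1 (hf (by have := Finset.mem_range.1 hk; omega : k ≤ i))
  have h2 : i + 1 ≤ ∑ k ∈ Finset.range (i+1), f k := by
    calc i + 1 = ∑ _k ∈ Finset.range (i+1), 1 := by simp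
    _ ≤ ∑ k ∈ Finset.range (i+1), f k := Finset.sum_le_sum hall
  have h3 : ∑ᶠ j, f j = ∑ k ∈ Finset.range (max N (i+1)), f k :=
    finsum_eq_range f _ (fun k hk => h k (le_trans (le_max_left _ _) hk))
  have h4 : ∑ k ∈ Finset.range (i+1), f k ≤ ∑ k ∈ Finset.range (max N (i+1)), f k :=
    Finset.sum_le_sum_of_subset (Finset.range_subset_range.2 (le_max_right _ _))
  omega

/-! ### Finiteness -/

lemma pc_le {n : ℕ} {p : (ℕ → ℕ) × (ℕ → ℕ)} (h : PairCond n p) (i : ℕ) :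
    p.1 i ≤ n ∧ p.2 i ≤ n := by
  obtain ⟨⟨a1, N1, hN1⟩, ⟨a2, N2, hN2⟩, hs⟩ := h
  constructor
  · exact le_trans (part_le_finsum p.1 N1 hN1 i) (by omega)
  · exact le_trans (part_le_finsum p.2 N2 hN2 i) (by omega)

lemma pc_zero {n : ℕ} {p : (ℕ → ℕ) × (ℕ → ℕ)} (h : PairCond n p) (i : ℕ) (hi : n ≤ i) :
    p.1 i = 0 ∧ p.2 i = 0 := by
  obtain ⟨⟨a1, N1, hN1⟩, ⟨a2, N2, hN2⟩, hs⟩ := h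
  constructor
  · exact zero_of_finsum_le p.1 a1 N1 hN1 i (by omega)
  · exact zero_of_finsum_le p.2 a2 N2 hN2 i (by omega)

instance pairT_finite (n : ℕ) : Finite (PairT n) := by
  let F : PairT n → (Fin (n+1) → Fin (n+1) × Fin (n+1)) := fun x => fun i =>
    (⟨x.1.1 i, by have := (pc_le x.2 i).1; omega⟩,
     ⟨x.1.2 i, by have := (pc_le x.2 i).2; omega⟩)
  have hinj : Function.Injective F := by
    intro x y hxy
    apply Subtype.ext
    apply Prod.ext <;> funext i <;> by_cases hi : i ≤ n
    · have := congrFun hxy ⟨i, by omega⟩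
      exact congrArg Fin.val (congrArg Prod.fst this)
    · rw [(pc_zero x.2 i (by omega)).1, (pc_zero y.2 i (by omega)).1]
    · have := congrFun hxy ⟨i, by omega⟩
      exact congrArg Fin.val (congrArg Prod.snd this)
    · rw [(pc_zero x.2 i (by omega)).2, (pc_zero y.2 i (by omega)).2]
  exact Finite.of_injective F hinj

instance badT_finite (n : ℕ) : Finite (BadT n) := by
  apply Finite.of_injective (fun x : BadT n => (⟨x.1, x.2.1⟩ : PairT n))
  intro a b hab
  simp only [Subtype.mk.injEq] at hab
  exact Subtype.ext hab

instance goodT_finite (n : ℕ) : Finite (GoodT n) := by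
  apply Finite.of_injective (fun x : GoodT n => (⟨x.1, x.2.1⟩ : PairT n))
  intro a b hab
  simp only [Subtype.mk.injEq] at hab
  exact Subtype.ext hab

/-! ### Splitting the count -/

noncomputable def splitEquiv (n : ℕ) : GoodT n ⊕ BadT n ≃ PairT n where
  toFun := Sum.elim (fun a => ⟨a.1, a.2.1⟩) (fun a => ⟨a.1, a.2.1⟩)
  invFun x := by
    classical
    exact if h : ∀ i, x.1.2 i ≤ x.1.1 i + 1 then Sum.inl ⟨x.1, x.2, h⟩
      else Sum.inr ⟨x.1, x.2, by
        push_neg at h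
        obtain ⟨i, hi⟩ := h
        exact ⟨i, by omega⟩⟩
  left_inv := by
    classical
    rintro (⟨p, hp, hq⟩ | ⟨p, hp, hq⟩)
    · simp only [Sum.elim_inl]
      exact dif_pos hq
    · simp only [Sum.elim_inr]
      refine dif_neg ?_
      intro hall
      obtain ⟨i, hi⟩ := hq
      have := hall i
      omega
  right_inv := by
    classical
    intro x
    dsimp only
    by_cases h : ∀ i, x.1.2 i ≤ x.1.1 i + 1
    · rw [dif_pos h]
      rfl
    · rw [dif_neg h]
      rfl

lemma card_split (n : ℕ) :
    Nat.card (PairT n) = Nat.card (GoodT n) + Nat.card (BadT n) := by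
  rw [← Nat.card_congr (splitEquiv n), Nat.card_sum]

/-! ### The bijection between bad pairs of `n` and all pairs of `n - 2` -/

def phi1 (μ ν : ℕ → ℕ) (j : ℕ) : ℕ → ℕ := fun i => if i ≤ j then ν i - 2 else μ (i-1)
def phi2 (μ ν : ℕ → ℕ) (j : ℕ) : ℕ → ℕ := fun i => if i < j then μ i + 2 else ν (i+1)
def psi1 (κ σ : ℕ → ℕ) (j : ℕ) : ℕ → ℕ := fun i => if i < j then σ i - 2 else κ (i+1)
def psi2 (κ σ : ℕ → ℕ) (j : ℕ) : ℕ → ℕ := fun i => if i ≤ j then κ i + 2 else σ (i-1)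

section Phi

variable {μ ν : ℕ → ℕ} {j : ℕ}
variable (hμ : Antitone μ) (hν : Antitone ν)
variable (hj : μ j + 2 ≤ ν j) (hmin : ∀ i, i < j → ¬(μ i + 2 ≤ ν i))

include hν hj in
lemma nu_ge_two : ∀ i, i ≤ j → 2 ≤ ν i := fun i hi => le_trans (by omega) (hν hi)

include hμ hν hj in
lemma phi1_anti : Antitone (phi1 μ ν j) := by
  apply antitone_nat_of_succ_le
  intro i
  unfold phi1
  by_cases h1 : i + 1 ≤ j
  · rw [if_pos h1, if_pos (by omega)]
    have := hν (by omega : i ≤ i + 1)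
    omega
  · by_cases h2 : i ≤ j
    · rw [if_neg h1, if_pos h2]
      have hij : i = j := by omega
      subst hij
      simp only [Nat.add_sub_cancel]
      omega
    · rw [if_neg h1, if_neg h2]
      exact hμ (by omega : i - 1 ≤ i + 1 - 1)

include hμ hν hmin in
lemma phi2_anti : Antitone (phi2 μ ν j) := by
  apply antitone_nat_of_succ_le
  intro i
  unfold phi2
  by_cases h1 : i + 1 < j
  · rw [if_pos h1, if_pos (by omega)]
    have := hμ (by omega : i ≤ i + 1)
    omega
  · by_cases h2 : i < j
    · rw [if_neg h1, if_pos h2]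
      have hmin' := hmin i h2
      have := hν (by omega : i ≤ i + 1 + 1)
      omega
    · rw [if_neg h1, if_neg h2]
      exact hν (by omega : i + 1 ≤ i + 1 + 1)

end Phi

section Psi

variable {κ σ : ℕ → ℕ} {j : ℕ}
variable (hκ : Antitone κ) (hσ : Antitone σ)
variable (hj : σ j ≤ κ j + 2) (hmin : ∀ i, i < j → ¬(σ i ≤ κ i + 2))

include hmin in
lemma sigma_ge_three : ∀ i, i < j → 3 ≤ σ i := by
  intro i hi
  have := hmin i hi
  omega

include hκ hσ hmin in
lemma psi1_anti : Antitone (psi1 κ σ j) := by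
  apply antitone_nat_of_succ_le
  intro i
  unfold psi1
  by_cases h1 : i + 1 < j
  · rw [if_pos h1, if_pos (by omega)]
    have := hσ (by omega : i ≤ i + 1)
    omega
  · by_cases h2 : i < j
    · rw [if_neg h1, if_pos h2]
      have h3 := hmin i h2
      have := hκ (by omega : i ≤ i + 1 + 1)
      omega
    · rw [if_neg h1, if_neg h2]
      exact hκ (by omega : i + 1 ≤ i + 1 + 1)

include hκ hσ hj in
lemma psi2_anti : Antitone (psi2 κ σ j) := by
  apply antitone_nat_of_succ_le
  intro i
  unfold psi2
  by_cases h1 : i + 1 ≤ j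
  · rw [if_pos h1, if_pos (by omega)]
    have := hκ (by omega : i ≤ i + 1)
    omega
  · by_cases h2 : i ≤ j
    · rw [if_neg h1, if_pos h2]
      have hij : i = j := by omega
      subst hij
      simp only [Nat.add_sub_cancel]
      omega
    · rw [if_neg h1, if_neg h2]
      exact hσ (by omega : i - 1 ≤ i + 1 - 1)

end Psi

/-! ### Sum computations -/

lemma phi_sum {μ ν : ℕ → ℕ} {j : ℕ} (hν2 : ∀ i, i ≤ j → 2 ≤ ν i)
    (Nμ Nν : ℕ) (hNμ : ∀ i, Nμ ≤ i → μ i = 0) (hNν : ∀ i, Nν ≤ i → ν i = 0) :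
    (∑ᶠ i, phi1 μ ν j i) + (∑ᶠ i, phi2 μ ν j i) + 2 = (∑ᶠ i, μ i) + (∑ᶠ i, ν i) := by
  set M := Nμ + Nν + j + 2 with hM
  have hzk : ∀ i, M ≤ i → phi1 μ ν j i = 0 := by
    intro i hi
    simp only [phi1]
    rw [if_neg (by omega)]
    exact hNμ _ (by omega)
  have hzs : ∀ i, M ≤ i → phi2 μ ν j i = 0 := by
    intro i hi
    simp only [phi2]
    rw [if_neg (by omega)]
    exact hNν _ (by omega)
  rw [finsum_eq_range _ M hzk, finsum_eq_range _ M hzs,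
    finsum_eq_range μ M (fun i hi => hNμ i (by omega)),
    finsum_eq_range ν M (fun i hi => hNν i (by omega))]
  have h1 : ∑ i ∈ Finset.range M, phi1 μ ν j i
      = (∑ i ∈ Finset.range (j+1), (ν i - 2)) + ∑ i ∈ Finset.range (M - (j+1)), μ (j + i) := by
    rw [← Finset.sum_range_add_sum_Ico _ (by omega : j + 1 ≤ M)]
    congr 1
    · exact Finset.sum_congr rfl (fun i hi => if_pos (by simp at hi; omega))
    · rw [Finset.sum_Ico_eq_sum_range]
      apply Finset.sum_congr rfl
      intro i _
      simp only [phi1]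
      rw [if_neg (by omega)]
      congr 1
      omega
  have h2 : ∑ i ∈ Finset.range M, phi2 μ ν j i
      = (∑ i ∈ Finset.range j, (μ i + 2)) + ∑ i ∈ Finset.range (M - j), ν (j + 1 + i) := by
    rw [← Finset.sum_range_add_sum_Ico _ (by omega : j ≤ M)]
    congr 1
    · exact Finset.sum_congr rfl (fun i hi => if_pos (by simp at hi; omega))
    · rw [Finset.sum_Ico_eq_sum_range]
      apply Finset.sum_congr rfl
      intro i _
      simp only [phi2]
      rw [if_neg (by omega)]
      congr 1
      omega
  have h3 : ∑ i ∈ Finset.range M, μ i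
      = (∑ i ∈ Finset.range j, μ i) + ∑ i ∈ Finset.range (M - j), μ (j + i) := by
    rw [← Finset.sum_range_add_sum_Ico _ (by omega : j ≤ M), Finset.sum_Ico_eq_sum_range]
  have h4 : ∑ i ∈ Finset.range M, ν i
      = (∑ i ∈ Finset.range (j+1), ν i) + ∑ i ∈ Finset.range (M - (j+1)), ν (j + 1 + i) := by
    rw [← Finset.sum_range_add_sum_Ico _ (by omega : j + 1 ≤ M), Finset.sum_Ico_eq_sum_range]
  have h5 : ∑ i ∈ Finset.range (M - j), μ (j + i)
      = (∑ i ∈ Finset.range (M - (j+1)), μ (j + i)) + μ (j + (M - (j+1))) := by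
    rw [show M - j = (M - (j+1)) + 1 by omega, Finset.sum_range_succ]
  have h6 : μ (j + (M - (j+1))) = 0 := hNμ _ (by omega)
  have h7 : ∑ i ∈ Finset.range (M - j), ν (j + 1 + i)
      = (∑ i ∈ Finset.range (M - (j+1)), ν (j + 1 + i)) + ν (j + 1 + (M - (j+1))) := by
    rw [show M - j = (M - (j+1)) + 1 by omega, Finset.sum_range_succ]
  have h8 : ν (j + 1 + (M - (j+1))) = 0 := hNν _ (by omega)
  have h9 : (∑ i ∈ Finset.range (j+1), (ν i - 2)) + 2 * (j+1) = ∑ i ∈ Finset.range (j+1), ν i := by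
    have hc : ∀ i ∈ Finset.range (j+1), ν i - 2 + 2 = ν i := by
      intro i hi
      have := hν2 i (by simp at hi; omega)
      omega
    calc (∑ i ∈ Finset.range (j+1), (ν i - 2)) + 2 * (j+1)
        = ∑ i ∈ Finset.range (j+1), (ν i - 2 + 2) := by
          rw [Finset.sum_add_distrib, Finset.sum_const, Finset.card_range, smul_eq_mul]
          omega
      _ = ∑ i ∈ Finset.range (j+1), ν i := Finset.sum_congr rfl hc
  have h10 : ∑ i ∈ Finset.range j, (μ i + 2) = (∑ i ∈ Finset.range j, μ i) + 2 * j := by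
    rw [Finset.sum_add_distrib, Finset.sum_const, Finset.card_range, smul_eq_mul]
    omega
  omega

lemma psi_sum {κ σ : ℕ → ℕ} {j : ℕ} (hσ3 : ∀ i, i < j → 3 ≤ σ i)
    (Nκ Nσ : ℕ) (hNκ : ∀ i, Nκ ≤ i → κ i = 0) (hNσ : ∀ i, Nσ ≤ i → σ i = 0) :
    (∑ᶠ i, psi1 κ σ j i) + (∑ᶠ i, psi2 κ σ j i) = (∑ᶠ i, κ i) + (∑ᶠ i, σ i) + 2 := by
  set M := Nκ + Nσ + j + 2 with hM
  have hzm : ∀ i, M ≤ i → psi1 κ σ j i = 0 := by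
    intro i hi
    simp only [psi1]
    rw [if_neg (by omega)]
    exact hNκ _ (by omega)
  have hzn : ∀ i, M ≤ i → psi2 κ σ j i = 0 := by
    intro i hi
    simp only [psi2]
    rw [if_neg (by omega)]
    exact hNσ _ (by omega)
  rw [finsum_eq_range _ M hzm, finsum_eq_range _ M hzn,
    finsum_eq_range κ M (fun i hi => hNκ i (by omega)),
    finsum_eq_range σ M (fun i hi => hNσ i (by omega))]
  have h1 : ∑ i ∈ Finset.range M, psi1 κ σ j i
      = (∑ i ∈ Finset.range j, (σ i - 2)) + ∑ i ∈ Finset.range (M - j), κ (j + 1 + i) := by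
    rw [← Finset.sum_range_add_sum_Ico _ (by omega : j ≤ M)]
    congr 1
    · exact Finset.sum_congr rfl (fun i hi => if_pos (by simp at hi; omega))
    · rw [Finset.sum_Ico_eq_sum_range]
      apply Finset.sum_congr rfl
      intro i _
      simp only [psi1]
      rw [if_neg (by omega)]
      congr 1
      omega
  have h2 : ∑ i ∈ Finset.range M, psi2 κ σ j i
      = (∑ i ∈ Finset.range (j+1), (κ i + 2)) + ∑ i ∈ Finset.range (M - (j+1)), σ (j + i) := by
    rw [← Finset.sum_range_add_sum_Ico _ (by omega : j + 1 ≤ M)]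
    congr 1
    · exact Finset.sum_congr rfl (fun i hi => if_pos (by simp at hi; omega))
    · rw [Finset.sum_Ico_eq_sum_range]
      apply Finset.sum_congr rfl
      intro i _
      simp only [psi2]
      rw [if_neg (by omega)]
      congr 1
      omega
  have h3 : ∑ i ∈ Finset.range M, κ i
      = (∑ i ∈ Finset.range (j+1), κ i) + ∑ i ∈ Finset.range (M - (j+1)), κ (j + 1 + i) := by
    rw [← Finset.sum_range_add_sum_Ico _ (by omega : j + 1 ≤ M), Finset.sum_Ico_eq_sum_range]
  have h4 : ∑ i ∈ Finset.range M, σ i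
      = (∑ i ∈ Finset.range j, σ i) + ∑ i ∈ Finset.range (M - j), σ (j + i) := by
    rw [← Finset.sum_range_add_sum_Ico _ (by omega : j ≤ M), Finset.sum_Ico_eq_sum_range]
  have h5 : ∑ i ∈ Finset.range (M - j), κ (j + 1 + i)
      = (∑ i ∈ Finset.range (M - (j+1)), κ (j + 1 + i)) + κ (j + 1 + (M - (j+1))) := by
    rw [show M - j = (M - (j+1)) + 1 by omega, Finset.sum_range_succ]
  have h6 : κ (j + 1 + (M - (j+1))) = 0 := hNκ _ (by omega)
  have h7 : ∑ i ∈ Finset.range (M - j), σ (j + i)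
      = (∑ i ∈ Finset.range (M - (j+1)), σ (j + i)) + σ (j + (M - (j+1))) := by
    rw [show M - j = (M - (j+1)) + 1 by omega, Finset.sum_range_succ]
  have h8 : σ (j + (M - (j+1))) = 0 := hNσ _ (by omega)
  have h9 : (∑ i ∈ Finset.range j, (σ i - 2)) + 2 * j = ∑ i ∈ Finset.range j, σ i := by
    have hc : ∀ i ∈ Finset.range j, σ i - 2 + 2 = σ i := by
      intro i hi
      have := hσ3 i (by simp at hi; omega)
      omega
    calc (∑ i ∈ Finset.range j, (σ i - 2)) + 2 * j
        = ∑ i ∈ Finset.range j, (σ i - 2 + 2) := by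
          rw [Finset.sum_add_distrib, Finset.sum_const, Finset.card_range, smul_eq_mul]
          omega
      _ = ∑ i ∈ Finset.range j, σ i := Finset.sum_congr rfl hc
  have h10 : ∑ i ∈ Finset.range (j+1), (κ i + 2)
      = (∑ i ∈ Finset.range (j+1), κ i) + 2 * (j+1) := by
    rw [Finset.sum_add_distrib, Finset.sum_const, Finset.card_range, smul_eq_mul]
    omega
  omega

/-! ### Pointwise inversion identities -/

lemma psi_phi_1 {μ ν : ℕ → ℕ} {j : ℕ} (i : ℕ) :
    psi1 (phi1 μ ν j) (phi2 μ ν j) j i = μ i := by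
  unfold psi1 phi1 phi2
  by_cases h : i < j
  · rw [if_pos h, if_pos h]
    omega
  · rw [if_neg h, if_neg (by omega : ¬ (i + 1 ≤ j))]
    congr 1 <;> omega

lemma psi_phi_2 {μ ν : ℕ → ℕ} {j : ℕ} (hν2 : ∀ i, i ≤ j → 2 ≤ ν i) (i : ℕ) :
    psi2 (phi1 μ ν j) (phi2 μ ν j) j i = ν i := by
  unfold psi2 phi1 phi2
  by_cases h : i ≤ j
  · rw [if_pos h, if_pos h]
    have := hν2 i h
    omega
  · rw [if_neg h, if_neg (by omega : ¬ (i - 1 < j))]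
    congr 1 <;> omega

lemma phi_psi_1 {κ σ : ℕ → ℕ} {j : ℕ} (i : ℕ) :
    phi1 (psi1 κ σ j) (psi2 κ σ j) j i = κ i := by
  unfold phi1 psi1 psi2
  by_cases h : i ≤ j
  · rw [if_pos h, if_pos h]
    omega
  · rw [if_neg h, if_neg (by omega : ¬ (i - 1 < j))]
    congr 1 <;> omega

lemma phi_psi_2 {κ σ : ℕ → ℕ} {j : ℕ} (hσ3 : ∀ i, i < j → 3 ≤ σ i) (i : ℕ) :
    phi2 (psi1 κ σ j) (psi2 κ σ j) j i = σ i := by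
  unfold phi2 psi1 psi2
  by_cases h : i < j
  · rw [if_pos h, if_pos h]
    have := hσ3 i h
    omega
  · rw [if_neg h, if_neg (by omega : ¬ (i + 1 ≤ j))]
    congr 1 <;> omega

/-! ### The equivalence -/

lemma psi_ex (κ σ : ℕ → ℕ) (hσ : IsPartitionFun σ) : ∃ i, σ i ≤ κ i + 2 := by
  obtain ⟨_, N, hN⟩ := hσ
  exact ⟨N, by rw [hN N le_rfl]; omega⟩

lemma phi_cond {n : ℕ} (hn : 2 ≤ n) (μ ν : ℕ → ℕ)
    (hpc : PairCond n (μ, ν)) (hex : ∃ i, μ i + 2 ≤ ν i) :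
    PairCond (n - 2) (phi1 μ ν (Nat.find hex), phi2 μ ν (Nat.find hex)) := by
  obtain ⟨⟨hμa, Nμ, hNμ⟩, ⟨hνa, Nν, hNν⟩, hsum⟩ := hpc
  set j := Nat.find hex with hjdef
  have hj : μ j + 2 ≤ ν j := Nat.find_spec hex
  have hmin : ∀ i, i < j → ¬(μ i + 2 ≤ ν i) := fun i hi => Nat.find_min hex hi
  have hν2 : ∀ i, i ≤ j → 2 ≤ ν i := nu_ge_two hνa hj
  refine ⟨⟨phi1_anti hμa hνa hj, ?_⟩, ⟨phi2_anti hμa hνa hmin, ?_⟩, ?_⟩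
  · refine ⟨Nμ + Nν + j + 2, fun i hi => ?_⟩
    simp only [phi1]
    rw [if_neg (by omega)]
    exact hNμ _ (by omega)
  · refine ⟨Nμ + Nν + j + 2, fun i hi => ?_⟩
    simp only [phi2]
    rw [if_neg (by omega)]
    exact hNν _ (by omega)
  · have h := phi_sum (μ := μ) (ν := ν) (j := j) hν2 Nμ Nν hNμ hNν
    have hsum' : (∑ᶠ i, μ i) + (∑ᶠ i, ν i) = n := hsum
    show (∑ᶠ i, phi1 μ ν j i) + (∑ᶠ i, phi2 μ ν j i) = n - 2
    omega

lemma psi_cond {n : ℕ} (hn : 2 ≤ n) (κ σ : ℕ → ℕ)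
    (hpc : PairCond (n - 2) (κ, σ)) (hex : ∃ i, σ i ≤ κ i + 2) :
    PairCond n (psi1 κ σ (Nat.find hex), psi2 κ σ (Nat.find hex)) ∧
      ∃ i, psi1 κ σ (Nat.find hex) i + 2 ≤ psi2 κ σ (Nat.find hex) i := by
  obtain ⟨⟨hκa, Nκ, hNκ⟩, ⟨hσa, Nσ, hNσ⟩, hsum⟩ := hpc
  set j := Nat.find hex with hjdef
  have hj : σ j ≤ κ j + 2 := Nat.find_spec hex
  have hmin : ∀ i, i < j → ¬(σ i ≤ κ i + 2) := fun i hi => Nat.find_min hex hi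
  have hσ3 : ∀ i, i < j → 3 ≤ σ i := sigma_ge_three hmin
  refine ⟨⟨⟨psi1_anti hκa hσa hmin, ?_⟩, ⟨psi2_anti hκa hσa hj, ?_⟩, ?_⟩, ⟨j, ?_⟩⟩
  · refine ⟨Nκ + Nσ + j + 2, fun i hi => ?_⟩
    simp only [psi1]
    rw [if_neg (by omega)]
    exact hNκ _ (by omega)
  · refine ⟨Nκ + Nσ + j + 2, fun i hi => ?_⟩
    simp only [psi2]
    rw [if_neg (by omega)]
    exact hNσ _ (by omega)
  · have h := psi_sum (κ := κ) (σ := σ) (j := j) hσ3 Nκ Nσ hNκ hNσ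
    have hsum' : (∑ᶠ i, κ i) + (∑ᶠ i, σ i) = n - 2 := hsum
    show (∑ᶠ i, psi1 κ σ j i) + (∑ᶠ i, psi2 κ σ j i) = n
    omega
  · simp only [psi1, psi2]
    rw [if_neg (by omega : ¬ (j < j)), if_pos (le_refl j)]
    have h5 : κ (j + 1) ≤ κ j := hκa (by omega : j ≤ j + 1)
    omega

lemma right_identity (κ σ : ℕ → ℕ) (hκa : Antitone κ)
    (hex : ∃ i, σ i ≤ κ i + 2)
    (hex2 : ∃ i, psi1 κ σ (Nat.find hex) i + 2 ≤ psi2 κ σ (Nat.find hex) i) :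
    (phi1 (psi1 κ σ (Nat.find hex)) (psi2 κ σ (Nat.find hex)) (Nat.find hex2),
     phi2 (psi1 κ σ (Nat.find hex)) (psi2 κ σ (Nat.find hex)) (Nat.find hex2)) = (κ, σ) := by
  set j := Nat.find hex with hjdef
  have hj : σ j ≤ κ j + 2 := Nat.find_spec hex
  have hmin : ∀ i, i < j → ¬(σ i ≤ κ i + 2) := fun i hi => Nat.find_min hex hi
  have hσ3 : ∀ i, i < j → 3 ≤ σ i := sigma_ge_three hmin
  have hfind : Nat.find hex2 = j := by
    rw [Nat.find_eq_iff]
    constructor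
    · simp only [psi1, psi2]
      rw [if_neg (by omega : ¬ (j < j)), if_pos (le_refl j)]
      have h5 : κ (j + 1) ≤ κ j := hκa (by omega : j ≤ j + 1)
      omega
    · intro i hi
      simp only [psi1, psi2]
      rw [if_pos hi, if_pos (by omega : i ≤ j)]
      have h1 := hmin i hi
      have h2 := hσ3 i hi
      omega
  rw [hfind]
  exact Prod.ext (funext fun i => phi_psi_1 i) (funext fun i => phi_psi_2 hσ3 i)

lemma left_identity (μ ν : ℕ → ℕ) (hνa : Antitone ν)
    (hex : ∃ i, μ i + 2 ≤ ν i)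
    (hex' : ∃ i, phi2 μ ν (Nat.find hex) i ≤ phi1 μ ν (Nat.find hex) i + 2) :
    (psi1 (phi1 μ ν (Nat.find hex)) (phi2 μ ν (Nat.find hex)) (Nat.find hex'),
     psi2 (phi1 μ ν (Nat.find hex)) (phi2 μ ν (Nat.find hex)) (Nat.find hex')) = (μ, ν) := by
  set j := Nat.find hex with hjdef
  have hj : μ j + 2 ≤ ν j := Nat.find_spec hex
  have hmin : ∀ i, i < j → ¬(μ i + 2 ≤ ν i) := fun i hi => Nat.find_min hex hi
  have hν2 : ∀ i, i ≤ j → 2 ≤ ν i := nu_ge_two hνa hj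
  have hfind : Nat.find hex' = j := by
    rw [Nat.find_eq_iff]
    constructor
    · simp only [phi1, phi2]
      rw [if_pos (le_refl j), if_neg (by omega : ¬ (j < j))]
      have h5 : ν (j + 1) ≤ ν j := hνa (by omega : j ≤ j + 1)
      have h6 := hν2 j le_rfl
      omega
    · intro i hi
      simp only [phi1, phi2]
      rw [if_pos (by omega : i ≤ j), if_pos hi]
      have h1 := hmin i hi
      have h2 := hν2 i (by omega)
      omega
  rw [hfind]
  exact Prod.ext (funext fun i => psi_phi_1 i) (funext fun i => psi_phi_2 hν2 i)

noncomputable def badEquiv (n : ℕ) (hn : 2 ≤ n) : BadT n ≃ PairT (n - 2) where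
  toFun p :=
    ⟨(phi1 p.1.1 p.1.2 (Nat.find p.2.2), phi2 p.1.1 p.1.2 (Nat.find p.2.2)),
      phi_cond hn p.1.1 p.1.2 (by obtain ⟨⟨a, b⟩, hpc, hex⟩ := p; exact hpc) p.2.2⟩
  invFun q :=
    ⟨(psi1 q.1.1 q.1.2 (Nat.find (psi_ex q.1.1 q.1.2 q.2.2.1)),
      psi2 q.1.1 q.1.2 (Nat.find (psi_ex q.1.1 q.1.2 q.2.2.1))),
      (psi_cond hn q.1.1 q.1.2 (by obtain ⟨⟨a, b⟩, hpc⟩ := q; exact hpc) _).1,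
      (psi_cond hn q.1.1 q.1.2 (by obtain ⟨⟨a, b⟩, hpc⟩ := q; exact hpc) _).2⟩
  left_inv := by
    rintro ⟨⟨μ, ν⟩, hpc, hex⟩
    apply Subtype.ext
    exact left_identity μ ν hpc.2.1.1 hex _
  right_inv := by
    rintro ⟨⟨κ, σ⟩, hpc⟩
    apply Subtype.ext
    exact right_identity κ σ hpc.1.1 _ _

/-! ### Bad pairs are empty for `n < 2` -/

lemma badT_empty (n : ℕ) (hn : n < 2) : IsEmpty (BadT n) := by
  constructor
  rintro ⟨⟨μ, ν⟩, hpc, i, hi⟩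
  obtain ⟨⟨hμa, Nμ, hNμ⟩, ⟨hνa, Nν, hNν⟩, hsum⟩ := hpc
  have h2 : ν i ≤ ∑ᶠ k, ν k := part_le_finsum ν Nν hNν i
  simp only at hsum hi
  omega

end PartitionPairsAux

open PartitionPairsAux in
/-- the number of pairs of partitions `(μ,ν)` with `|μ| + |ν| = n` and
`νᵢ ≤ μᵢ + 1` for all `i` equals `p₂(n) − p₂(n−2)` (with `p₂` of a negative number
being `0`). -/
theorem card_partition_pairs_nu_le_mu_add_one (n : ℕ) :
    Nat.card {p : (ℕ → ℕ) × (ℕ → ℕ) //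
        IsPartitionFun p.1 ∧ IsPartitionFun p.2 ∧
        (∑ᶠ i, p.1 i) + (∑ᶠ i, p.2 i) = n ∧
        ∀ i, p.2 i ≤ p.1 i + 1} =
      numPartitionPairs n - (if 2 ≤ n then numPartitionPairs (n - 2) else 0) := by
  have hLHS : Nat.card {p : (ℕ → ℕ) × (ℕ → ℕ) //
      IsPartitionFun p.1 ∧ IsPartitionFun p.2 ∧
      (∑ᶠ i, p.1 i) + (∑ᶠ i, p.2 i) = n ∧
      ∀ i, p.2 i ≤ p.1 i + 1} = Nat.card (GoodT n) := by
    apply Nat.card_congr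
    apply Equiv.subtypeEquivRight
    intro p
    unfold PairCond
    tauto
  have hsplit := card_split n
  rw [hLHS, numPartitionPairs_eq]
  by_cases hn : 2 ≤ n
  · rw [if_pos hn]
    have hbad : Nat.card (BadT n) = numPartitionPairs (n - 2) := by
      rw [numPartitionPairs_eq]
      exact Nat.card_congr (badEquiv n hn)
    omega
  · rw [if_neg hn]
    have hbad : Nat.card (BadT n) = 0 := by
      have := badT_empty n (by omega)
      exact Nat.card_of_isEmpty
    omega
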